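/- Let P be an algebra and a right C-comodule with coaction Δ_P(p) = p₍₀₎ ⊗ p₍₁₎. Then the C-extension P^{coC} ⊆ P is coalgebra-Galois if and only if the induced right action of A := (C*)^{op} on P, given by p ◁ a := p₍₀₎ a(p₍₁₎), is a Galois action. -/

import Mathlib

/-!
STATEMENT 7. For an algebra and right C-comodule P, the C-extension
P^{coC} ⊆ P is coalgebra-Galois iff the induced right action of (C*)^op on P,
p ◁ f = p₍₀₎ f(p₍₁₎), is a Galois action.
-/

open TensorProduct LinearMap

noncomputable section

namespace CGal

variable {k : Type*} [Field k]
variable {P : Type*} [Ring P] [Algebra k P]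

section Action

variable {A : Type*} [AddCommGroup A] [Module k A]
variable (act : P →ₗ[k] A →ₗ[k] P)

/-- The invariant subalgebra `P^A`. -/
def actInv : Set P :=
  {b : P | ∀ (p : P) (a : A), act (b * p) a = b * act p a}

/-- The kernel of `P ⊗ P → P ⊗_{P^A} P`. -/
def actRel : Submodule k (P ⊗[k] P) :=
  Submodule.span k
    {x | ∃ p b p', b ∈ actInv act ∧ x = (p * b) ⊗ₜ[k] p' - p ⊗ₜ[k] (b * p')}

/-- Evaluation of the canonical map: `Can(p ⊗ p')(a) = p (p' ◁ a)`. -/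
def CanApply (a : A) : P ⊗[k] P →ₗ[k] P :=
  TensorProduct.lift ((LinearMap.mul k P).compl₂ (act.flip a))

/-- The canonical map `Can : P ⊗ P → Hom(A, P)` (lifted to `P ⊗ P`). -/
def CanHom : P ⊗[k] P →ₗ[k] (A →ₗ[k] P) :=
  TensorProduct.lift
    (LinearMap.mk₂ k (fun p p' => (LinearMap.mul k P p) ∘ₗ (act p'))
      (fun p₁ p₂ p' => by ext a; simp [add_mul])
      (fun c p p' => by ext a; simp [smul_mul_assoc])
      (fun p p₁' p₂' => by ext a; simp [mul_add])
      (fun c p p' => by ext a; simp))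

/-- The (right) action `act` of `A` on `P` is Galois. -/
def IsGaloisAction : Prop :=
  (∀ x : P ⊗[k] P, (∀ a : A, CanApply act a x = 0) ↔ x ∈ actRel act) ∧
  ∃ V : Submodule k (A →ₗ[k] k),
    (LinearMap.range (CanHom act)
        = Submodule.span k
            {f : A →ₗ[k] P | ∃ (p : P) (v : A →ₗ[k] k), v ∈ V ∧ f = v.smulRight p}) ∧
    (∀ a : A, (∀ v ∈ V, v a = 0) → a = 0)

end Action

variable {C : Type*} [AddCommGroup C] [Module k C] [Coalgebra k C]

/-- The coaction invariants `P^{coC}`. -/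
def coinv (δ : P →ₗ[k] P ⊗[k] C) : Set P :=
  {b : P | ∀ p : P, δ (b * p) = b • δ p}

/-- `δ` is a (counital, coassociative) right `C`-coaction on `P`. -/
def IsCoaction (δ : P →ₗ[k] P ⊗[k] C) : Prop :=
  (∀ p : P, (TensorProduct.rid k P) ((lTensor P (Coalgebra.counit : C →ₗ[k] k)) (δ p)) = p) ∧
  (∀ p : P, (rTensor C δ) (δ p)
      = (TensorProduct.assoc k P C C).symm
          ((lTensor P (Coalgebra.comul : C →ₗ[k] C ⊗[k] C)) (δ p)))

/-- The kernel of `P ⊗ P → P ⊗_B P` for `B = P^{coC}`. -/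
def galRel (δ : P →ₗ[k] P ⊗[k] C) : Submodule k (P ⊗[k] P) :=
  Submodule.span k
    {x | ∃ p b p', b ∈ coinv δ ∧ x = (p * b) ⊗ₜ[k] p' - p ⊗ₜ[k] (b * p')}

/-- The lifted canonical map `~can : P ⊗ P → P ⊗ C`. -/
def canLift (δ : P →ₗ[k] P ⊗[k] C) : P ⊗[k] P →ₗ[k] P ⊗[k] C :=
  (TensorProduct.map (LinearMap.mul' k P) LinearMap.id)
    ∘ₗ (TensorProduct.assoc k P P C).symm.toLinearMap
    ∘ₗ (lTensor P δ)

/-- The extension `P^{coC} ⊆ P` is coalgebra-Galois. -/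
def IsCGalois (δ : P →ₗ[k] P ⊗[k] C) : Prop :=
  Function.Surjective (canLift δ) ∧ LinearMap.ker (canLift δ) = galRel δ

/-- The action of `(C*)^{op}` on `P` induced by the coaction:
`p ◁ f = p₍₀₎ f(p₍₁₎)`. -/
def inducedAct (δ : P →ₗ[k] P ⊗[k] C) : P →ₗ[k] (C →ₗ[k] k) →ₗ[k] P :=
  LinearMap.mk₂ k
    (fun p f => (TensorProduct.rid k P) ((lTensor P f) (δ p)))
    (fun p₁ p₂ f => by simp [map_add])
    (fun c p f => by simp [map_smul])
    (fun p f₁ f₂ => by simp [LinearMap.lTensor_add, LinearMap.add_apply, map_add])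
    (fun c p f => by simp [LinearMap.lTensor_smul, LinearMap.smul_apply, map_smul])


/-- evaluation `P ⊗ C → Hom(C*, P)`, `p ⊗ c ↦ (f ↦ f c • p)`. -/
def evMap : P ⊗[k] C →ₗ[k] ((C →ₗ[k] k) →ₗ[k] P) :=
  TensorProduct.lift
    (LinearMap.mk₂ k (fun p c => (Module.Dual.eval k C c).smulRight p)
      (fun p₁ p₂ c => by ext f; simp [smul_add])
      (fun a p c => by ext f; simp only [LinearMap.smulRight_apply, LinearMap.smul_apply]; rw [smul_comm])
      (fun p c₁ c₂ => by ext f; simp [add_smul])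
      (fun a p c => by ext f; simp [mul_smul]))

@[simp] lemma evMap_tmul (p : P) (c : C) (f : C →ₗ[k] k) :
    evMap (p ⊗ₜ[k] c) f = f c • p := rfl

lemma evMap_eq_rid (x : P ⊗[k] C) (f : C →ₗ[k] k) :
    evMap x f = TensorProduct.rid k P (lTensor P f x) := by
  induction x using TensorProduct.induction_on with
  | zero => simp
  | tmul p c => simp [TensorProduct.smul_tmul']
  | add x y hx hy => simp [hx, hy]

lemma evMap_injective : Function.Injective (evMap (k := k) (P := P) (C := C)) := by
  rw [injective_iff_map_eq_zero]
  intro x hx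
  classical
  let b := Module.Basis.ofVectorSpace k C
  set ι := Module.Basis.ofVectorSpaceIndex k C
  let e : P ⊗[k] C ≃ₗ[k] (ι →₀ P) :=
    (LinearEquiv.lTensor P b.repr).trans (TensorProduct.finsuppScalarRight k k P ι)
  have he : ∀ y : P ⊗[k] C, ∀ i, e y i = evMap y (b.coord i) := by
    intro y i
    induction y using TensorProduct.induction_on with
    | zero => simp only [map_zero, evMap]; simp
    | tmul p c =>
        show (TensorProduct.finsuppScalarRight k k P _) (p ⊗ₜ[k] (b.repr c)) i = _
        rw [TensorProduct.finsuppScalarRight_apply_tmul_apply]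
        simp [Module.Basis.coord_apply]
    | add y z hy hz => simp [map_add, Finsupp.add_apply, hy, hz]
  have : e x = 0 := by
    ext i; rw [he, hx]; simp
  simpa using e.injective (by simpa using this)

lemma evMap_eq_iff (x y : P ⊗[k] C) : x = y ↔ ∀ f, evMap x f = evMap y f := by
  constructor
  · rintro rfl f; rfl
  · intro h; exact evMap_injective (LinearMap.ext h)

lemma evMap_smul (b : P) (x : P ⊗[k] C) (f : C →ₗ[k] k) :
    evMap (b • x) f = b * evMap x f := by
  induction x using TensorProduct.induction_on with
  | zero => simp
  | tmul p c => simp [TensorProduct.smul_tmul', smul_eq_mul, mul_smul_comm]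
  | add x y hx hy => simp [smul_add, hx, hy, mul_add]


lemma inducedAct_eq (δ : P →ₗ[k] P ⊗[k] C) (p : P) (f : C →ₗ[k] k) :
    inducedAct δ p f = evMap (δ p) f := by
  rw [evMap_eq_rid]; rfl

lemma evMap_canLift_tmul (δ : P →ₗ[k] P ⊗[k] C) (p p' : P) (f : C →ₗ[k] k) :
    evMap (canLift δ (p ⊗ₜ[k] p')) f = p * evMap (δ p') f := by
  unfold canLift
  simp only [coe_comp, LinearEquiv.coe_coe, Function.comp_apply, lTensor_tmul]
  induction δ p' using TensorProduct.induction_on with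
  | zero => simp
  | tmul q c => simp [mul_smul_comm]
  | add x y hx hy => simp only [tmul_add, map_add, LinearMap.add_apply, hx, hy, mul_add]

lemma CanApply_eq (δ : P →ₗ[k] P ⊗[k] C) (f : C →ₗ[k] k) (x : P ⊗[k] P) :
    CanApply (inducedAct δ) f x = evMap (canLift δ x) f := by
  induction x using TensorProduct.induction_on with
  | zero => simp
  | tmul p p' =>
      rw [evMap_canLift_tmul, ← inducedAct_eq]
      rfl
  | add x y hx hy => simp [map_add, hx, hy]

lemma CanHom_eq (δ : P →ₗ[k] P ⊗[k] C) (x : P ⊗[k] P) :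
    CanHom (inducedAct δ) x = evMap (canLift δ x) := by
  ext f
  induction x using TensorProduct.induction_on with
  | zero => simp
  | tmul p p' =>
      rw [evMap_canLift_tmul, ← inducedAct_eq]
      rfl
  | add x y hx hy => simp [map_add, hx, hy]

lemma actInv_eq_coinv (δ : P →ₗ[k] P ⊗[k] C) :
    actInv (inducedAct δ) = coinv δ := by
  ext b
  constructor
  · intro hb p
    rw [evMap_eq_iff]
    intro f
    rw [evMap_smul, ← inducedAct_eq, ← inducedAct_eq]
    exact hb p f
  · intro hb p f
    rw [inducedAct_eq, inducedAct_eq, hb p, evMap_smul]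

lemma actRel_eq_galRel (δ : P →ₗ[k] P ⊗[k] C) :
    actRel (inducedAct δ) = galRel δ := by
  unfold actRel galRel
  rw [actInv_eq_coinv]

lemma canLift_eq_zero_iff (δ : P →ₗ[k] P ⊗[k] C) (x : P ⊗[k] P) :
    canLift δ x = 0 ↔ ∀ f, CanApply (inducedAct δ) f x = 0 := by
  constructor
  · intro h f; rw [CanApply_eq, h]; simp
  · intro h
    apply evMap_injective
    ext f
    rw [← CanApply_eq, h]; simp

lemma span_top_of_sep (D : Set C)
    (h : ∀ a : C →ₗ[k] k, (∀ d ∈ D, a d = 0) → a = 0) :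
    Submodule.span k D = ⊤ := by
  rw [eq_top_iff]
  intro v _
  rw [← Subspace.forall_mem_dualAnnihilator_apply_eq_zero_iff (Submodule.span k D) v]
  intro φ hφ
  have : φ = 0 := by
    apply h
    intro d hd
    exact (Submodule.mem_dualAnnihilator φ).mp hφ d (Submodule.subset_span hd)
  simp [this]

theorem cgalois_iff_induced_action_galois
    (δ : P →ₗ[k] P ⊗[k] C) (hδ : IsCoaction δ) :
    IsCGalois δ ↔ IsGaloisAction (inducedAct δ) := by
  constructor
  · rintro ⟨hs, hk⟩
    refine ⟨fun x => ?_, LinearMap.range (Module.Dual.eval k C), ?_, ?_⟩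
    · rw [← canLift_eq_zero_iff, actRel_eq_galRel, ← hk]
      exact (LinearMap.mem_ker).symm
    · ext g
      constructor
      · rintro ⟨y, rfl⟩
        rw [CanHom_eq]
        induction canLift δ y using TensorProduct.induction_on with
        | zero => simp only [map_zero]; exact Submodule.zero_mem _
        | tmul p c =>
            refine Submodule.subset_span ⟨p, Module.Dual.eval k C c, ⟨c, rfl⟩, ?_⟩
            ext f; simp
        | add x y hx hy => rw [map_add]; exact Submodule.add_mem _ hx hy
      · intro hg
        refine Submodule.span_le.mpr ?_ hg
        rintro _ ⟨p, v, ⟨c, rfl⟩, rfl⟩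
        obtain ⟨y, hy⟩ := hs (p ⊗ₜ[k] c)
        refine ⟨y, ?_⟩
        rw [CanHom_eq, hy]
        ext f; simp
    · intro a ha
      ext c
      simpa using ha (Module.Dual.eval k C c) ⟨c, rfl⟩
  · rintro ⟨h1, V, hV, hsep⟩
    constructor
    · -- surjectivity
      rcases subsingleton_or_nontrivial P with hP | hP
      · intro x
        refine ⟨0, ?_⟩
        rw [map_zero]
        induction x using TensorProduct.induction_on with
        | zero => rfl
        | tmul p c => rw [Subsingleton.elim p 0, TensorProduct.zero_tmul]
        | add x y hx hy => rw [← hx, ← hy, add_zero]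
      · -- a functional on P sending 1 to 1
        have h1P : ¬ ∀ φ : Module.Dual k P, φ (1 : P) = 0 := by
          rw [Module.forall_dual_apply_eq_zero_iff]
          exact one_ne_zero
        obtain ⟨φ, hφ⟩ := not_forall.mp h1P
        set lam : P →ₗ[k] k := (φ (1 : P))⁻¹ • φ with hlam
        have hlam1 : lam (1 : P) = 1 := by
          simp [hlam, inv_mul_cancel₀ hφ]
        set μ : P ⊗[k] C →ₗ[k] C :=
          (TensorProduct.lid k C).toLinearMap ∘ₗ (TensorProduct.map lam LinearMap.id) with hμdef
        have hμ : ∀ (x : P ⊗[k] C) (f : C →ₗ[k] k), f (μ x) = lam (evMap x f) := by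
          intro x f
          induction x using TensorProduct.induction_on with
          | zero => simp
          | tmul p c => simp [hμdef, mul_comm]
          | add x y hx hy => simp [map_add, hx, hy]
        -- every element of V comes from C
        have claimA : ∀ v ∈ V, ∃ c : C, Module.Dual.eval k C c = v := by
          intro v hv
          have hmem : v.smulRight (1 : P) ∈ LinearMap.range (CanHom (inducedAct δ)) := by
            rw [hV]
            exact Submodule.subset_span ⟨1, v, hv, rfl⟩
          obtain ⟨y, hy⟩ := hmem
          rw [CanHom_eq] at hy
          refine ⟨μ (canLift δ y), ?_⟩
          ext f
          have := hμ (canLift δ y) f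
          rw [hy] at this
          simp only [Module.Dual.eval_apply, this, LinearMap.smulRight_apply,
            map_smul, smul_eq_mul, hlam1, mul_one]
        -- the set of group-likes detecting V spans C
        have hD : Submodule.span k {c : C | Module.Dual.eval k C c ∈ V} = ⊤ := by
          apply span_top_of_sep
          intro a ha
          apply hsep a
          intro v hv
          obtain ⟨c, rfl⟩ := claimA v hv
          exact ha c hv
        have key : ∀ (c : C) (p : P),
            (Module.Dual.eval k C c).smulRight p ∈
              Submodule.span k {f : (C →ₗ[k] k) →ₗ[k] P |
                ∃ (p : P) (v : (C →ₗ[k] k) →ₗ[k] k), v ∈ V ∧ f = v.smulRight p} := by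
          intro c
          have hc : c ∈ Submodule.span k {c : C | Module.Dual.eval k C c ∈ V} := by
            rw [hD]; trivial
          induction hc using Submodule.span_induction with
          | mem d hd => exact fun p => Submodule.subset_span ⟨p, Module.Dual.eval k C d, hd, rfl⟩
          | zero =>
              intro p
              have : (Module.Dual.eval k C (0 : C)).smulRight p = 0 := by ext f; simp
              rw [this]; exact Submodule.zero_mem _
          | add c₁ c₂ _ _ ih₁ ih₂ =>
              intro p
              have : (Module.Dual.eval k C (c₁ + c₂)).smulRight p
                  = (Module.Dual.eval k C c₁).smulRight p
                    + (Module.Dual.eval k C c₂).smulRight p := by ext f; simp [add_smul]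
              rw [this]; exact Submodule.add_mem _ (ih₁ p) (ih₂ p)
          | smul a c₀ _ ih =>
              intro p
              have : (Module.Dual.eval k C (a • c₀)).smulRight p
                  = a • (Module.Dual.eval k C c₀).smulRight p := by ext f; simp [mul_smul]
              rw [this]; exact Submodule.smul_mem _ a (ih p)
        intro x
        have hx : evMap x ∈ LinearMap.range (CanHom (inducedAct δ)) := by
          rw [hV]
          induction x using TensorProduct.induction_on with
          | zero => simp only [map_zero]; exact Submodule.zero_mem _
          | tmul p c =>
              have : evMap (p ⊗ₜ[k] c) = (Module.Dual.eval k C c).smulRight p := by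
                ext f; simp
              rw [this]; exact key c p
          | add x y hx hy => rw [map_add]; exact Submodule.add_mem _ hx hy
        obtain ⟨y, hy⟩ := hx
        rw [CanHom_eq] at hy
        exact ⟨y, evMap_injective hy⟩
    · -- kernel
      ext x
      rw [LinearMap.mem_ker, canLift_eq_zero_iff, h1 x, actRel_eq_galRel]

end CGal
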